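/- Let S, T be finite nonempty subsets of a metric space with |S ∩ T| = r, and p > 0. Then d^p_{MJ}(S,T) ≤ ( 1 - (r/2)(1/|S| + 1/|T|) )^{1/p} · d_H(S,T). -/

import Mathlib

open Finset Metric

noncomputable def dMJ {X : Type*} [MetricSpace X] (p : ℝ) (S T : Finset X) : ℝ :=
  ((∑ t ∈ T, infDist t (S : Set X) ^ p) / (2 * T.card)
    + (∑ s ∈ S, infDist s (T : Set X) ^ p) / (2 * S.card)) ^ (1 / p)

noncomputable def dHaus {X : Type*} [MetricSpace X] (S T : Finset X)
    (hS : S.Nonempty) (hT : T.Nonempty) : ℝ :=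
  max (S.sup' hS fun s => infDist s (T : Set X)) (T.sup' hT fun t => infDist t (S : Set X))

lemma sum_rpow_le {X : Type*} [MetricSpace X] [DecidableEq X] {p : ℝ} (hp : 0 < p)
    (S T : Finset X) {H : ℝ}
    (hb : ∀ t ∈ T, infDist t (S : Set X) ≤ H) :
    ∑ t ∈ T, infDist t (S : Set X) ^ p ≤ ((T \ S).card : ℝ) * H ^ p := by
  have hsplit : ∑ t ∈ T, infDist t (S : Set X) ^ p
      = ∑ t ∈ T \ S, infDist t (S : Set X) ^ p
        + ∑ t ∈ T ∩ S, infDist t (S : Set X) ^ p := by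
    rw [← Finset.sum_sdiff (Finset.inter_subset_left (s₂ := S)), Finset.sdiff_inter_self_left]
  rw [hsplit]
  have h2 : ∑ t ∈ T ∩ S, infDist t (S : Set X) ^ p = 0 := by
    refine Finset.sum_eq_zero fun t ht => ?_
    have : t ∈ S := (Finset.mem_inter.1 ht).2
    rw [infDist_zero_of_mem (by exact_mod_cast this), Real.zero_rpow hp.ne']
  rw [h2, add_zero]
  calc ∑ t ∈ T \ S, infDist t (S : Set X) ^ p
      ≤ ∑ _t ∈ T \ S, H ^ p := by
        refine Finset.sum_le_sum fun t ht => ?_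
        exact Real.rpow_le_rpow infDist_nonneg (hb t (Finset.mem_sdiff.1 ht).1) hp.le
    _ = ((T \ S).card : ℝ) * H ^ p := by
        rw [Finset.sum_const, nsmul_eq_mul]

theorem mj_intersection_bound {X : Type*} [MetricSpace X] [DecidableEq X]
    (p : ℝ) (hp : 0 < p) (S T : Finset X) (hS : S.Nonempty) (hT : T.Nonempty)
    (r : ℕ) (hr : (S ∩ T).card = r) :
    dMJ p S T ≤
      (1 - (r / 2 : ℝ) * (1 / S.card + 1 / T.card)) ^ (1 / p) * dHaus S T hS hT := by
  set H := dHaus S T hS hT with hHdef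
  obtain ⟨s₀, hs₀⟩ := hS
  have hH0 : 0 ≤ H := by
    refine le_trans (le_trans infDist_nonneg (Finset.le_sup' (fun s => infDist s (T : Set X)) hs₀)) (le_max_left _ _)
  have hbT : ∀ t ∈ T, infDist t (S : Set X) ≤ H :=
    fun t ht => le_trans (Finset.le_sup' (fun t => infDist t (S : Set X)) ht) (le_max_right _ _)
  have hbS : ∀ s ∈ S, infDist s (T : Set X) ≤ H :=
    fun s hs => le_trans (Finset.le_sup' (fun s => infDist s (T : Set X)) hs) (le_max_left _ _)
  have hnS : (0 : ℝ) < S.card := by exact_mod_cast Finset.card_pos.2 ⟨s₀, hs₀⟩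
  have hnT : (0 : ℝ) < T.card := by exact_mod_cast Finset.card_pos.2 hT
  have hrT : r ≤ T.card := hr ▸ Finset.card_le_card Finset.inter_subset_right
  have hrS : r ≤ S.card := hr ▸ Finset.card_le_card Finset.inter_subset_left
  have hcT : ((T \ S).card : ℝ) = (T.card : ℝ) - r := by
    have := Finset.card_sdiff_add_card_inter T S
    have hc : (T ∩ S).card = r := by rw [Finset.inter_comm, hr]
    rw [hc] at this
    have : (T \ S).card = T.card - r := by omega
    rw [this, Nat.cast_sub hrT]
  have hcS : ((S \ T).card : ℝ) = (S.card : ℝ) - r := by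
    have := Finset.card_sdiff_add_card_inter S T
    rw [hr] at this
    have : (S \ T).card = S.card - r := by omega
    rw [this, Nat.cast_sub hrS]
  set C : ℝ := 1 - (r / 2 : ℝ) * (1 / S.card + 1 / T.card) with hCdef
  have hC0 : 0 ≤ C := by
    have h1 : (r : ℝ) / S.card ≤ 1 := (div_le_one hnS).2 (by exact_mod_cast hrS)
    have h2 : (r : ℝ) / T.card ≤ 1 := (div_le_one hnT).2 (by exact_mod_cast hrT)
    have : (r / 2 : ℝ) * (1 / S.card + 1 / T.card)
        = ((r : ℝ) / S.card) / 2 + ((r : ℝ) / T.card) / 2 := by ring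
    rw [hCdef, this]; linarith
  have key : (∑ t ∈ T, infDist t (S : Set X) ^ p) / (2 * T.card)
      + (∑ s ∈ S, infDist s (T : Set X) ^ p) / (2 * S.card) ≤ C * H ^ p := by
    have hA := sum_rpow_le hp S T hbT
    have hB := sum_rpow_le hp T S hbS
    rw [hcT] at hA
    rw [hcS] at hB
    have h1 : (∑ t ∈ T, infDist t (S : Set X) ^ p) / (2 * T.card)
        ≤ (((T.card : ℝ) - r) * H ^ p) / (2 * T.card) :=
      div_le_div_of_nonneg_right hA (by linarith) |>.trans_eq rfl
    have h2 : (∑ s ∈ S, infDist s (T : Set X) ^ p) / (2 * S.card)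
        ≤ (((S.card : ℝ) - r) * H ^ p) / (2 * S.card) :=
      div_le_div_of_nonneg_right hB (by linarith)
    have heq : (((T.card : ℝ) - r) * H ^ p) / (2 * T.card)
        + (((S.card : ℝ) - r) * H ^ p) / (2 * S.card) = C * H ^ p := by
      rw [hCdef]; field_simp; ring
    linarith
  have hLHS0 : 0 ≤ (∑ t ∈ T, infDist t (S : Set X) ^ p) / (2 * T.card)
      + (∑ s ∈ S, infDist s (T : Set X) ^ p) / (2 * S.card) := by
    have := Finset.sum_nonneg fun t (_ : t ∈ T) => Real.rpow_nonneg (infDist_nonneg (x := t) (s := (S : Set X))) p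
    have := Finset.sum_nonneg fun s (_ : s ∈ S) => Real.rpow_nonneg (infDist_nonneg (x := s) (s := (T : Set X))) p
    positivity
  calc dMJ p S T ≤ (C * H ^ p) ^ (1 / p) :=
        Real.rpow_le_rpow hLHS0 key (by positivity)
    _ = C ^ (1 / p) * (H ^ p) ^ (1 / p) :=
        Real.mul_rpow hC0 (Real.rpow_nonneg hH0 p)
    _ = C ^ (1 / p) * H := by
        rw [← Real.rpow_mul hH0, mul_one_div_cancel hp.ne', Real.rpow_one]
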